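/- Let A be a finite set of integers, τ a permutation of A, and p ≥ 2 an integer. Then ∑_{i ∈ A} |p·i − τ(i)| ≥ (p−1)·∑_{i ∈ A} |i|. Moreover, if in addition p ≥ |j| for every j ∈ A, then equality holds if and only if τ preserves signs, i.e. sgn(τ(i)) = sgn(i) for every i ∈ A (where sgn(0) = 0). -/

import Mathlib

theorem stmt8 (p : ℤ) (hp : 2 ≤ p) (A : Finset ℤ)
    (τ : Equiv.Perm ℤ) (hτ : ∀ i ∈ A, τ i ∈ A) :
    ((p - 1) * ∑ i ∈ A, |i| ≤ ∑ i ∈ A, |p * i - τ i|) ∧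
    ((∀ j ∈ A, |j| ≤ p) →
      ((∑ i ∈ A, |p * i - τ i| = (p - 1) * ∑ i ∈ A, |i|) ↔
        ∀ i ∈ A, Int.sign (τ i) = Int.sign i)) := by
  have hperm : Finset.image τ A = A := by
    apply Finset.eq_of_subset_of_card_le
    · intro j hj
      obtain ⟨i, hi, rfl⟩ := Finset.mem_image.1 hj
      exact hτ i hi
    · rw [Finset.card_image_of_injective _ τ.injective]
  have hsum : ∑ i ∈ A, |τ i| = ∑ i ∈ A, |i| := by
    conv_rhs => rw [← hperm]
    rw [Finset.sum_image (fun a _ b _ h => τ.injective h)]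
  have hpt : ∀ i ∈ A, p * |i| - |τ i| ≤ |p * i - τ i| := by
    intro i hi
    have := abs_sub_abs_le_abs_sub (p * i) (τ i)
    rwa [abs_mul, abs_of_nonneg (by linarith : (0:ℤ) ≤ p)] at this
  have hrw : (p - 1) * ∑ i ∈ A, |i| = ∑ i ∈ A, (p * |i| - |τ i|) := by
    rw [Finset.sum_sub_distrib, hsum, ← Finset.mul_sum]; ring
  have hle : (p - 1) * ∑ i ∈ A, |i| ≤ ∑ i ∈ A, |p * i - τ i| :=
    hrw ▸ Finset.sum_le_sum hpt
  refine ⟨hle, fun hbound => ?_⟩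
  constructor
  · intro heq
    have hpteq : ∀ i ∈ A, |p * i - τ i| = p * |i| - |τ i| := by
      have h2 : ∑ i ∈ A, (p * |i| - |τ i|) = ∑ i ∈ A, |p * i - τ i| := by
        rw [← hrw, heq]
      intro i hi
      exact ((Finset.sum_eq_sum_iff_of_le hpt).1 h2 i hi).symm
    have hz : 0 ∈ A → τ 0 = 0 := by
      intro h0
      have := hpteq 0 h0
      have h1 : |τ (0:ℤ)| = -|τ (0:ℤ)| := by simpa using this
      have h2 := abs_nonneg (τ (0:ℤ))
      have : |τ (0:ℤ)| = 0 := by omega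
      exact abs_eq_zero.1 this
    intro i hi
    have hne : i ≠ 0 → τ i ≠ 0 := by
      intro hi0 hti
      have h0A : (0:ℤ) ∈ A := hti ▸ hτ i hi
      have := hz h0A
      exact hi0 (τ.injective (hti.trans this.symm))
    have heqi := hpteq i hi
    rcases lt_trichotomy i 0 with h | h | h
    · have hti : τ i < 0 := by
        rcases lt_trichotomy (τ i) 0 with h' | h' | h'
        · exact h'
        · exact absurd h' (hne (by omega))
        · exfalso
          rw [abs_of_nonpos (by nlinarith : p * i - τ i ≤ 0),
            abs_of_neg h, abs_of_pos h'] at heqi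
          linarith
      rw [Int.sign_eq_neg_one_of_neg hti, Int.sign_eq_neg_one_of_neg h]
    · subst h
      rw [hz hi]
    · have hti : 0 < τ i := by
        rcases lt_trichotomy (τ i) 0 with h' | h' | h'
        · exfalso
          rw [abs_of_nonneg (by nlinarith : 0 ≤ p * i - τ i),
            abs_of_pos h, abs_of_neg h'] at heqi
          linarith
        · exact absurd h' (hne (by omega))
        · exact h'
      rw [Int.sign_eq_one_of_pos hti, Int.sign_eq_one_of_pos h]
  · intro hs
    rw [hrw]
    apply Finset.sum_congr rfl
    intro i hi
    have hb : |τ i| ≤ p := hbound _ (hτ i hi)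
    rcases lt_trichotomy i 0 with h | h | h
    · have hti : τ i < 0 := by
        have := hs i hi
        rw [Int.sign_eq_neg_one_of_neg h] at this
        rcases lt_trichotomy (τ i) 0 with h' | h' | h'
        · exact h'
        · simp [h'] at this
        · rw [Int.sign_eq_one_of_pos h'] at this; omega
      have h1 : τ i - p * i ≥ 0 := by
        have : -τ i ≤ p := by rw [abs_of_neg hti] at hb; omega
        nlinarith
      rw [abs_of_nonpos (by omega : p * i - τ i ≤ 0), abs_of_neg h, abs_of_neg hti]
      ring
    · subst h
      have h0 : τ (0:ℤ) = 0 := by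
        have := hs 0 hi
        simpa [Int.sign_eq_zero_iff_zero] using this
      simp [h0]
    · have hti : 0 < τ i := by
        have := hs i hi
        rw [Int.sign_eq_one_of_pos h] at this
        rcases lt_trichotomy (τ i) 0 with h' | h' | h'
        · rw [Int.sign_eq_neg_one_of_neg h'] at this; omega
        · simp [h'] at this
        · exact h'
      have h1 : 0 ≤ p * i - τ i := by
        have : τ i ≤ p := by rw [abs_of_pos hti] at hb; omega
        nlinarith
      rw [abs_of_nonneg h1, abs_of_pos h, abs_of_pos hti]
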